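/- arXiv:2204.03413 — 2 statements merged into one kernel-verified Lean document; each statement's English description precedes it below -/
import Mathlib

section
/- Let r ≥ 1 and let G be the complete graph on 2r+1 vertices with vertex set containing two distinguished vertices s and t. Let F be a set of edges of G such that in G \ F there exist r pairwise edge-disjoint paths from s to t. Then the distance between s and t in G \ F is at most 2. -/
/-- There exist `r` pairwise edge-disjoint paths from `s` to `t` in `G`. -/
def EdgeDisjointPaths {V : Type} (G : SimpleGraph V) (s t : V) (r : ℕ) : Prop :=
  ∃ p : Fin r → G.Walk s t, (∀ i, (p i).IsPath) ∧
    ∀ i j, i ≠ j → ∀ e, e ∈ (p i).edges → e ∉ (p j).edges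

lemma firstEdge_mem {V : Type} {G : SimpleGraph V} {u v : V} (p : G.Walk u v)
    (hp : ¬ p.Nil) : s(u, p.getVert 1) ∈ p.edges := by
  obtain ⟨x, h, q, rfl⟩ := SimpleGraph.Walk.not_nil_iff.mp hp
  simp [SimpleGraph.Walk.getVert_cons_succ]

theorem stmt0 (r : ℕ) (hr : 1 ≤ r) (s t : Fin (2 * r + 1)) (hst : s ≠ t)
    (F : Set (Sym2 (Fin (2 * r + 1))))
    (h : EdgeDisjointPaths ((SimpleGraph.completeGraph (Fin (2 * r + 1))).deleteEdges F) s t r) :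
    ((SimpleGraph.completeGraph (Fin (2 * r + 1))).deleteEdges F).dist s t ≤ 2 := by
  classical
  set G' := (SimpleGraph.completeGraph (Fin (2 * r + 1))).deleteEdges F with hG'
  by_cases hadj : G'.Adj s t
  · calc G'.dist s t ≤ hadj.toWalk.length := SimpleGraph.dist_le _
    _ ≤ 2 := by simp
  obtain ⟨p, hpath, hdisj⟩ := h
  have hnil : ∀ i, ¬ (p i).Nil := fun i => SimpleGraph.Walk.not_nil_of_ne hst
  have hnilr : ∀ i, ¬ (p i).reverse.Nil := fun i =>
    SimpleGraph.Walk.not_nil_of_ne hst.symm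
  set f : Fin r → Fin (2 * r + 1) := fun i => (p i).getVert 1 with hf
  set g : Fin r → Fin (2 * r + 1) := fun i => (p i).reverse.getVert 1 with hg
  have hfadj : ∀ i, G'.Adj s (f i) := fun i => (p i).adj_snd (hnil i)
  have hgadj : ∀ i, G'.Adj t (g i) := fun i => (p i).reverse.adj_snd (hnilr i)
  have hfe : ∀ i, s(s, f i) ∈ (p i).edges := fun i => firstEdge_mem _ (hnil i)
  have hge : ∀ i, s(t, g i) ∈ (p i).edges := fun i => by
    have := firstEdge_mem _ (hnilr i)
    rwa [SimpleGraph.Walk.edges_reverse, List.mem_reverse] at this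
  have hfne : ∀ i, f i ≠ t := fun i hi => hadj (hi ▸ hfadj i)
  have hgne : ∀ i, g i ≠ s := fun i hi => hadj ((hi ▸ hgadj i).symm)
  set A : Finset (Fin (2 * r + 1)) :=
    Finset.univ.filter (fun v => G'.Adj s v ∧ v ≠ t) with hA
  set B : Finset (Fin (2 * r + 1)) :=
    Finset.univ.filter (fun v => G'.Adj t v ∧ v ≠ s) with hB
  have hfinj : Function.Injective f := by
    intro i j hij
    by_contra hne
    exact hdisj i j hne _ (hfe i) (hij ▸ hfe j)
  have hginj : Function.Injective g := by
    intro i j hij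
    by_contra hne
    exact hdisj i j hne _ (hge i) (hij ▸ hge j)
  have hAcard : r ≤ A.card := by
    have : Function.Injective (fun i : Fin r => (⟨f i, by
        simp only [hA, Finset.mem_filter, Finset.mem_univ, true_and]
        exact ⟨hfadj i, hfne i⟩⟩ : {x // x ∈ A})) := by
      intro i j hij
      exact hfinj (congrArg Subtype.val hij)
    simpa using Fintype.card_le_of_injective _ this
  have hBcard : r ≤ B.card := by
    have : Function.Injective (fun i : Fin r => (⟨g i, by
        simp only [hB, Finset.mem_filter, Finset.mem_univ, true_and]
        exact ⟨hgadj i, hgne i⟩⟩ : {x // x ∈ B})) := by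
      intro i j hij
      exact hginj (congrArg Subtype.val hij)
    simpa using Fintype.card_le_of_injective _ this
  have hsub : A ∪ B ⊆ Finset.univ \ {s, t} := by
    intro v hv
    simp only [hA, hB, Finset.mem_union, Finset.mem_filter, Finset.mem_univ, true_and] at hv
    simp only [Finset.mem_sdiff, Finset.mem_univ, Finset.mem_insert, Finset.mem_singleton,
      true_and]
    rcases hv with ⟨h1, h2⟩ | ⟨h1, h2⟩
    · exact not_or.mpr ⟨fun hv => G'.irrefl (hv ▸ h1), h2⟩
    · exact not_or.mpr ⟨h2, fun hv => G'.irrefl (hv ▸ h1)⟩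
  have hunion : (A ∪ B).card ≤ 2 * r - 1 := by
    have := Finset.card_le_card hsub
    have hcard : (Finset.univ \ ({s, t} : Finset (Fin (2 * r + 1)))).card = 2 * r - 1 := by
      rw [Finset.card_sdiff_of_subset (by simp)]
      simp [Finset.card_insert_of_notMem, hst]
    omega
  have hinter : 0 < (A ∩ B).card := by
    have := Finset.card_union_add_card_inter A B
    omega
  obtain ⟨v, hv⟩ := Finset.card_pos.mp hinter
  simp only [hA, hB, Finset.mem_inter, Finset.mem_filter, Finset.mem_univ, true_and] at hv
  obtain ⟨⟨hsv, -⟩, ⟨htv, -⟩⟩ := hv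
  calc G'.dist s t ≤ (SimpleGraph.Walk.cons hsv (SimpleGraph.Walk.cons htv.symm
        SimpleGraph.Walk.nil)).length := SimpleGraph.dist_le _
    _ ≤ 2 := by simp
end

section
/- For every k ≥ 1, the complete bipartite graph K_{2k,2k} contains k pairwise edge-disjoint Hamiltonian cycles. -/
open SimpleGraph Sum Fin.NatCast

section aux
set_option linter.unusedSectionVars false
variable {k : ℕ} [NeZero (2*k)]

private lemma adjLR (a b : Fin (2*k)) :
    (completeBipartiteGraph (Fin (2*k)) (Fin (2*k))).Adj (Sum.inl a) (Sum.inr b) := by simp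

private lemma adjRL (a b : Fin (2*k)) :
    (completeBipartiteGraph (Fin (2*k)) (Fin (2*k))).Adj (Sum.inr b) (Sum.inl a) := by simp

private def P (c : Fin (2*k)) :
    (t : ℕ) → (completeBipartiteGraph (Fin (2*k)) (Fin (2*k))).Walk (Sum.inl 0) (Sum.inl (t : Fin (2*k)))
  | 0 => SimpleGraph.Walk.nil.copy rfl (by simp)
  | t+1 => ((P c t).append
      (SimpleGraph.Walk.cons (adjLR (t : Fin (2*k)) ((t : Fin (2*k)) + c))
        (SimpleGraph.Walk.cons (adjRL ((t : Fin (2*k)) + 1) ((t : Fin (2*k)) + c))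
          SimpleGraph.Walk.nil))).copy rfl (by push_cast; ring_nf)

private lemma P_support (c : Fin (2*k)) (t : ℕ) :
    (P c t).support = Sum.inl 0 ::
      (List.range t).flatMap (fun (s : ℕ) => [Sum.inr ((s : Fin (2*k)) + c), Sum.inl ((s : Fin (2*k)) + 1)]) := by
  induction t with
  | zero => simp [P]
  | succ t ih => simp [P, SimpleGraph.Walk.support_append, ih, List.range_succ]

private lemma P_edges (c : Fin (2*k)) (t : ℕ) :
    (P c t).edges = (List.range t).flatMap (fun (s : ℕ) =>
      [s(Sum.inl (s : Fin (2*k)), Sum.inr ((s : Fin (2*k)) + c)),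
       s(Sum.inr ((s : Fin (2*k)) + c), Sum.inl ((s : Fin (2*k)) + 1))]) := by
  induction t with
  | zero => simp [P]
  | succ t ih => simp [P, SimpleGraph.Walk.edges_append, ih, List.range_succ]

private def Cyc (c : Fin (2*k)) :
    (completeBipartiteGraph (Fin (2*k)) (Fin (2*k))).Walk (Sum.inl 0) (Sum.inl 0) :=
  (P c (2*k)).copy rfl (by rw [Fin.natCast_self])

private lemma Cyc_support (c : Fin (2*k)) :
    (Cyc c).support = Sum.inl 0 ::
      (List.range (2*k)).flatMap (fun (s : ℕ) => [Sum.inr ((s : Fin (2*k)) + c), Sum.inl ((s : Fin (2*k)) + 1)]) := by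
  rw [Cyc, SimpleGraph.Walk.support_copy, P_support]

private lemma Cyc_edges (c : Fin (2*k)) :
    (Cyc c).edges = (List.range (2*k)).flatMap (fun (s : ℕ) =>
      [s(Sum.inl (s : Fin (2*k)), Sum.inr ((s : Fin (2*k)) + c)),
       s(Sum.inr ((s : Fin (2*k)) + c), Sum.inl ((s : Fin (2*k)) + 1))]) := by
  rw [Cyc, SimpleGraph.Walk.edges_copy, P_edges]

private lemma myCastInj {s s' : ℕ} (hs : s < 2*k) (hs' : s' < 2*k)
    (h : (s : Fin (2*k)) = (s' : Fin (2*k))) : s = s' := by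
  have := congrArg Fin.val h
  rwa [Fin.val_cast_of_lt hs, Fin.val_cast_of_lt hs'] at this

private lemma add_myCastInj {s s' : ℕ} (hs : s < 2*k) (hs' : s' < 2*k) {d : Fin (2*k)}
    (h : (s : Fin (2*k)) + d = (s' : Fin (2*k)) + d) : s = s' :=
  myCastInj hs hs' (add_right_cancel h)

private lemma myOneNeZero : (1 : Fin (2*k)) ≠ 0 := by
  intro h
  have h2 := congrArg Fin.val h
  rw [Fin.val_one', Fin.val_zero] at h2
  have hk : 2*k ≠ 0 := NeZero.ne _
  have : 1 % (2*k) = 1 := Nat.mod_eq_of_lt (by omega)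
  omega

private lemma ne_add_one (x : Fin (2*k)) : x ≠ x + 1 :=
  fun h => myOneNeZero (left_eq_add.mp h)

private lemma mem_supp_tail (c : Fin (2*k)) (v : Fin (2*k) ⊕ Fin (2*k)) :
    v ∈ (List.range (2*k)).flatMap
      (fun (s : ℕ) => [Sum.inr ((s : Fin (2*k)) + c), Sum.inl ((s : Fin (2*k)) + 1)]) := by
  rw [List.mem_flatMap]
  cases v with
  | inl a =>
    refine ⟨(a - 1).val, by simp [List.mem_range, Fin.is_lt], ?_⟩
    simp [Fin.cast_val_eq_self, sub_add_cancel]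
  | inr b =>
    refine ⟨(b - c).val, by simp [List.mem_range, Fin.is_lt], ?_⟩
    simp [Fin.cast_val_eq_self, sub_add_cancel]

private lemma supp_tail_nodup (c : Fin (2*k)) :
    ((List.range (2*k)).flatMap
      (fun (s : ℕ) => [Sum.inr ((s : Fin (2*k)) + c), Sum.inl ((s : Fin (2*k)) + 1)])).Nodup := by
  rw [List.nodup_flatMap]
  refine ⟨fun s _ => by simp, ?_⟩
  rw [List.pairwise_iff_getElem]
  intro a b ha hb hab
  rw [List.length_range] at ha hb
  simp only [List.getElem_range, Function.onFun]
  intro v hv hv'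
  have hne : a ≠ b := by omega
  simp only [List.mem_cons, List.mem_singleton, List.not_mem_nil, or_false] at hv hv'
  rcases hv with h1 | h1 <;> rcases hv' with h2 | h2 <;> rw [h1] at h2
  · exact hne (add_myCastInj ha hb (Sum.inr.inj h2))
  · simp at h2
  · simp at h2
  · exact hne (add_myCastInj ha hb (Sum.inl.inj h2))

private lemma edges_nodup (c : Fin (2*k)) : (Cyc c).edges.Nodup := by
  rw [Cyc_edges, List.nodup_flatMap]
  constructor
  · intro s _
    refine List.nodup_cons.mpr ⟨?_, List.nodup_singleton _⟩
    simp only [List.mem_singleton]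
    intro h
    rw [Sym2.eq_iff] at h
    rcases h with ⟨h1, _⟩ | ⟨h1, _⟩
    · exact absurd h1 (by simp)
    · exact ne_add_one _ (Sum.inl.inj h1)
  · rw [List.pairwise_iff_getElem]
    intro a b ha hb hab
    rw [List.length_range] at ha hb
    simp only [List.getElem_range, Function.onFun]
    intro e he he'
    have hne : a ≠ b := by omega
    simp only [List.mem_cons, List.mem_singleton, List.not_mem_nil, or_false] at he he'
    rcases he with h1 | h1 <;> rcases he' with h2 | h2 <;> rw [h1, Sym2.eq_iff] at h2 <;>
        rcases h2 with ⟨h3, h4⟩ | ⟨h3, h4⟩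
    · exact hne (myCastInj ha hb (Sum.inl.inj h3))
    · simp at h3
    · simp at h3
    · exact hne (add_myCastInj ha hb (Sum.inr.inj h4))
    · simp at h3
    · exact hne (add_myCastInj ha hb (Sum.inr.inj h3))
    · exact hne (add_myCastInj ha hb (Sum.inr.inj h3))
    · simp at h3

private lemma cyc_hamiltonian (c : Fin (2*k)) : (Cyc c).IsHamiltonianCycle := by
  rw [SimpleGraph.Walk.isHamiltonianCycle_iff_isCycle_and_support_count_tail_eq_one]
  have hne : Cyc c ≠ SimpleGraph.Walk.nil := by
    intro h
    have hm : Sum.inr c ∈ ((Cyc c).support).tail := by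
      rw [Cyc_support]
      have := mem_supp_tail c (Sum.inr c)
      simpa using this
    rw [h] at hm
    simp at hm
  constructor
  · rw [SimpleGraph.Walk.isCycle_def]
    refine ⟨(SimpleGraph.Walk.isTrail_def _).mpr (edges_nodup c), hne, ?_⟩
    rw [Cyc_support]
    exact supp_tail_nodup c
  · intro a
    rw [Cyc_support]
    exact @List.count_eq_one_of_mem _ instBEqOfDecidableEq _ _ _ (supp_tail_nodup c) (mem_supp_tail c a)

end aux

theorem stmt12 (k : ℕ) (hk : 1 ≤ k) :
    ∃ (v : Fin k → Fin (2 * k) ⊕ Fin (2 * k))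
      (c : ∀ i, (completeBipartiteGraph (Fin (2 * k)) (Fin (2 * k))).Walk (v i) (v i)),
      (∀ i, (c i).IsHamiltonianCycle) ∧
      (∀ i j, i ≠ j → ∀ e ∈ (c i).edges, e ∉ (c j).edges) := by
  haveI : NeZero (2*k) := ⟨by omega⟩
  refine ⟨fun _ => Sum.inl 0, fun i => Cyc (((2*(i:ℕ) : ℕ) : Fin (2*k))), fun i => cyc_hamiltonian _, ?_⟩
  intro i j hij e hei hej
  rw [Cyc_edges, List.mem_flatMap] at hei hej
  obtain ⟨s, hs, hes⟩ := hei
  obtain ⟨s', hs', hes'⟩ := hej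
  rw [List.mem_range] at hs hs'
  have hi : 2*(i:ℕ) < 2*k := by omega
  have hj : 2*(j:ℕ) < 2*k := by omega
  have heq2 : ((2*(i:ℕ) : ℕ) : Fin (2*k)) = ((2*(j:ℕ) : ℕ) : Fin (2*k)) → False := by
    intro h
    have := myCastInj hi hj h
    exact hij (Fin.ext (by omega))
  have parity : ∀ {x y : ℕ}, 2*x < 2*k → 2*y+1 < 2*k →
      ((2*x : ℕ) : Fin (2*k)) = ((2*y : ℕ) : Fin (2*k)) + 1 → False := by
    intro x y hx hy h
    have h2 : (((2*y : ℕ) : Fin (2*k)) + 1) = ((2*y+1 : ℕ) : Fin (2*k)) := by push_cast; ring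
    rw [h2] at h
    have := myCastInj hx hy h
    omega
  have hj1 : 2*(j:ℕ)+1 < 2*k := by omega
  have hi1 : 2*(i:ℕ)+1 < 2*k := by omega
  simp only [List.mem_cons, List.mem_singleton, List.not_mem_nil, or_false] at hes hes'
  rcases hes with h1 | h1 <;> rcases hes' with h2 | h2 <;> rw [h1, Sym2.eq_iff] at h2 <;>
      rcases h2 with ⟨h3, h4⟩ | ⟨h3, h4⟩
  · -- inl s = inl s', inr (s+2i) = inr (s'+2j)
    have e1 := Sum.inl.inj h3
    have e2 := Sum.inr.inj h4
    rw [e1] at e2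
    exact heq2 (add_left_cancel e2)
  · simp at h3
  · simp at h3
  · -- h3 : inl ↑s = inl (↑s'+1), h4 : inr (↑s+2i) = inr (↑s'+2j)
    have e1 := Sum.inl.inj h3
    have e2 := Sum.inr.inj h4
    rw [e1, add_assoc] at e2
    have e3 := add_left_cancel e2
    exact parity hj hi1 (e3.symm.trans (add_comm 1 _))
  ·
    simp at h3
  · -- h3 : inr (↑s+2i) = inr (↑s'+2j), h4 : inl (↑s+1) = inl ↑s'
    have e1 := Sum.inl.inj h4
    have e2 := Sum.inr.inj h3
    rw [← e1, add_assoc] at e2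
    have e3 := add_left_cancel e2.symm
    exact parity hi hj1 (e3.symm.trans (add_comm 1 _))
  · -- both second elems, first alignment: inr(s+2i)=inr(s'+2j), inl(s+1)=inl(s'+1)
    have e1 := Sum.inl.inj h4
    have e2 := Sum.inr.inj h3
    have e0 : (s : Fin (2*k)) = (s' : Fin (2*k)) := add_right_cancel e1
    rw [e0] at e2
    exact heq2 (add_left_cancel e2)
  · simp at h3
end
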